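/- arXiv:1009.1203 — 2 statements merged into one kernel-verified Lean document; each statement's English description precedes it below -/
import Mathlib

section
/- Let n ≥ 2 and N ≥ 1 be integers, A = (a_{ij})_{1≤i,j≤n-1} ∈ M_{n-1}(ℂ), and η_{(1)} = (η_{01},…,η_{n-1,1}), η_{(2)} = (η_{02},…,η_{n-1,2}) ∈ (ℂ∖{0})^n, with D_i = diag(η_{0i},…,η_{n-1,i}) for i = 1,2. Then the following are equivalent: (a) the orthogonality relation ∑_{x∈X(n,N)} b_n(x;N;η_{(1)}) φ_A(x;m) conj(φ_A(x;m')) = δ_{m,m'} (∏_{i=0}^{n-1} η_{i2}^{m_i}) / binom(N,m) holds for all m, m' ∈ X(n,N); (b) there exists a complex number ζ with ζ^N = 1 such that A₀* D₁ A₀ = ζ D₂, where A₀* denotes the conjugate transpose of A₀. -/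
open Finset MvPolynomial

/-- `X(n,N)`: the set of tuples in `ℕ₀ⁿ` with coordinate sum `N`,
as a `Finset` of functions `Fin n → ℕ`. -/
def XSet (n N : ℕ) : Finset (Fin n → ℕ) :=
  (Fintype.piFinset fun _ : Fin n => Finset.range (N + 1)).filter fun x => ∑ i, x i = N

/-- The multivariate Krawtchouk polynomial `φ_A(x;m)` associated to the bordered
matrix `A₀` (whose row `0` and column `0` consist of ones): it is the coefficient of
`t^m` in the generating function `∏ᵢ (∑ⱼ (A₀)ᵢⱼ tⱼ)^{xᵢ}`, divided by the multinomial
coefficient `binom(N, m) = (∑ mᵢ)! / ∏ mᵢ!`. -/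
noncomputable def phi {n : ℕ} (A0 : Matrix (Fin n) (Fin n) ℂ) (x m : Fin n → ℕ) : ℂ :=
  MvPolynomial.coeff (Finsupp.equivFunOnFinite.symm m)
      (∏ i, (∑ j, MvPolynomial.C (A0 i j) * MvPolynomial.X j) ^ x i)
    / (Nat.multinomial Finset.univ m : ℂ)

namespace KrawtchoukAux

variable {n : ℕ}

/-! ### Finsupp embeddings -/

noncomputable def fs (m : Fin n → ℕ) : Fin n →₀ ℕ := Finsupp.equivFunOnFinite.symm m

noncomputable def emb (m m' : Fin n → ℕ) : (Fin n ⊕ Fin n) →₀ ℕ :=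
  Finsupp.equivFunOnFinite.symm (Sum.elim m m')

@[simp] lemma fs_apply (m : Fin n → ℕ) (i : Fin n) : fs m i = m i := rfl
@[simp] lemma emb_apply_inl (m m' : Fin n → ℕ) (j : Fin n) : emb m m' (Sum.inl j) = m j := rfl
@[simp] lemma emb_apply_inr (m m' : Fin n → ℕ) (k : Fin n) : emb m m' (Sum.inr k) = m' k := rfl

lemma fs_inj : Function.Injective (fs (n := n)) :=
  Finsupp.equivFunOnFinite.symm.injective

lemma mapDomain_inl_add_mapDomain_inr (m m' : Fin n → ℕ) :
    Finsupp.mapDomain Sum.inl (fs m) + Finsupp.mapDomain Sum.inr (fs m') = emb m m' := by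
  ext a
  cases a with
  | inl j =>
      simp [Finsupp.mapDomain_apply Sum.inl_injective,
        Finsupp.mapDomain_notin_range _ _ (by simp : (Sum.inl j : Fin n ⊕ Fin n) ∉ Set.range Sum.inr)]
  | inr k =>
      simp [Finsupp.mapDomain_apply Sum.inr_injective,
        Finsupp.mapDomain_notin_range _ _ (by simp : (Sum.inr k : Fin n ⊕ Fin n) ∉ Set.range Sum.inl)]

/-! ### XSet facts -/

lemma mem_XSet {N : ℕ} {x : Fin n → ℕ} : x ∈ XSet n N ↔ ∑ i, x i = N := by
  simp only [XSet, Finset.mem_filter, Fintype.mem_piFinset, Finset.mem_range]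
  constructor
  · exact fun h => h.2
  · intro h
    refine ⟨fun i => ?_, h⟩
    have : x i ≤ ∑ j, x j := Finset.single_le_sum (fun j _ => Nat.zero_le _) (Finset.mem_univ i)
    omega

lemma XSet_eq_piAntidiag (N : ℕ) : XSet n N = Finset.piAntidiag Finset.univ N := by
  ext x
  rw [mem_XSet, Finset.mem_piAntidiag]
  simp

lemma mult_ne_zero (x : Fin n → ℕ) : ((Nat.multinomial Finset.univ x : ℂ)) ≠ 0 :=
  Nat.cast_ne_zero.mpr (Nat.multinomial_pos _ _).ne'

/-! ### Coefficient separation -/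

lemma coeff_emb_mul (P Q : MvPolynomial (Fin n) ℂ) (m m' : Fin n → ℕ) :
    coeff (emb m m') (rename Sum.inl P * rename Sum.inr Q)
      = coeff (fs m) P * coeff (fs m') Q := by
  rw [coeff_mul]
  rw [Finset.sum_eq_single_of_mem
      ((fs m).mapDomain Sum.inl, (fs m').mapDomain Sum.inr)
      (by rw [Finset.HasAntidiagonal.mem_antidiagonal]; exact mapDomain_inl_add_mapDomain_inr m m')]
  · rw [coeff_rename_mapDomain _ Sum.inl_injective, coeff_rename_mapDomain _ Sum.inr_injective]
  · rintro ⟨d1, d2⟩ hmem hne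
    by_contra hc
    have h1 : coeff d1 (rename Sum.inl P) ≠ 0 := fun h => hc (by simp [h])
    have h2 : coeff d2 (rename Sum.inr Q) ≠ 0 := fun h => hc (by simp [h])
    obtain ⟨u, hu, -⟩ := coeff_rename_ne_zero _ _ _ h1
    obtain ⟨v, hv, -⟩ := coeff_rename_ne_zero _ _ _ h2
    rw [Finset.HasAntidiagonal.mem_antidiagonal] at hmem
    apply hne
    have hu' : u = fs m := by
      ext j
      have := DFunLike.congr_fun hmem (Sum.inl j)
      rw [← hu, ← hv] at this
      simpa [Finsupp.mapDomain_apply Sum.inl_injective,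
        Finsupp.mapDomain_notin_range _ _
          (by simp : (Sum.inl j : Fin n ⊕ Fin n) ∉ Set.range Sum.inr)] using this
    have hv' : v = fs m' := by
      ext k
      have := DFunLike.congr_fun hmem (Sum.inr k)
      rw [← hu, ← hv] at this
      simpa [Finsupp.mapDomain_apply Sum.inr_injective,
        Finsupp.mapDomain_notin_range _ _
          (by simp : (Sum.inr k : Fin n ⊕ Fin n) ∉ Set.range Sum.inl)] using this
    rw [← hu, ← hv, hu', hv']

/-! ### The bilinear form polynomial -/

noncomputable def bilin (B : Matrix (Fin n) (Fin n) ℂ) : MvPolynomial (Fin n ⊕ Fin n) ℂ :=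
  ∑ k, ∑ j, C (B k j) * X (Sum.inl j) * X (Sum.inr k)

lemma term_eq_monomial (c : ℂ) (a b : Fin n ⊕ Fin n) :
    C c * X a * X b = monomial (Finsupp.single a 1 + Finsupp.single b 1) c := by
  rw [C_apply, X, X, monomial_mul, monomial_mul]
  simp

lemma pair_eq_iff (j k j' k' : Fin n) :
    (Finsupp.single (Sum.inl j' : Fin n ⊕ Fin n) 1 + Finsupp.single (Sum.inr k') 1
      = Finsupp.single (Sum.inl j) 1 + Finsupp.single (Sum.inr k) 1) ↔ j' = j ∧ k' = k := by
  constructor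
  · intro h
    have h1 := DFunLike.congr_fun h (Sum.inl j')
    have h2 := DFunLike.congr_fun h (Sum.inr k')
    simp only [Finsupp.add_apply, Finsupp.single_apply] at h1 h2
    constructor
    · by_contra hj
      simp [Sum.inl.injEq, hj, (Ne.symm hj)] at h1
    · by_contra hk
      simp [Sum.inr.injEq, hk, (Ne.symm hk)] at h2
  · rintro ⟨rfl, rfl⟩; rfl

lemma coeff_bilin (B : Matrix (Fin n) (Fin n) ℂ) (j k : Fin n) :
    coeff (Finsupp.single (Sum.inl j) 1 + Finsupp.single (Sum.inr k) 1) (bilin B) = B k j := by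
  unfold bilin
  rw [coeff_sum]
  simp only [coeff_sum, term_eq_monomial, coeff_monomial]
  rw [Finset.sum_eq_single k]
  · rw [Finset.sum_eq_single j]
    · simp
    · intro j' _ hj'
      rw [if_neg]
      intro h
      exact hj' ((pair_eq_iff j k j' k).mp h).1
    · simp
  · intro k' _ hk'
    apply Finset.sum_eq_zero
    intro j' _
    rw [if_neg]
    intro h
    exact hk' ((pair_eq_iff j k j' k').mp h).2
  · simp

lemma bilin_smul (B : Matrix (Fin n) (Fin n) ℂ) (c : ℂ) :
    bilin (c • B) = C c * bilin B := by
  unfold bilin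
  simp only [Finset.mul_sum]
  refine Finset.sum_congr rfl fun k _ => Finset.sum_congr rfl fun j _ => ?_
  simp [Matrix.smul_apply, _root_.map_mul]
  ring

/-! ### Weighted homogeneity -/

def wt : (Fin n ⊕ Fin n) → ℕ × ℕ := Sum.elim (fun _ => (1, 0)) (fun _ => (0, 1))

lemma weight_eq (d : (Fin n ⊕ Fin n) →₀ ℕ) :
    Finsupp.weight wt d = (∑ j, d (Sum.inl j), ∑ k, d (Sum.inr k)) := by
  rw [Finsupp.weight_apply, Finsupp.sum_fintype _ _ (fun _ => by simp)]
  rw [Fintype.sum_sum_type]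
  have h1 : ∀ j : Fin n, d (Sum.inl j) • wt (Sum.inl j : Fin n ⊕ Fin n)
      = ((d (Sum.inl j), 0) : ℕ × ℕ) := by
    intro j; simp [wt, Prod.ext_iff]
  have h2 : ∀ k : Fin n, d (Sum.inr k) • wt (Sum.inr k : Fin n ⊕ Fin n)
      = ((0, d (Sum.inr k)) : ℕ × ℕ) := by
    intro k; simp [wt, Prod.ext_iff]
  simp only [h1, h2, Prod.ext_iff]
  constructor <;> simp [Prod.fst_sum, Prod.snd_sum]

lemma isWH_bilin (B : Matrix (Fin n) (Fin n) ℂ) :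
    IsWeightedHomogeneous wt (bilin B) (1, 1) := by
  apply IsWeightedHomogeneous.sum
  intro k _
  apply IsWeightedHomogeneous.sum
  intro j _
  rw [term_eq_monomial]
  apply isWeightedHomogeneous_monomial
  rw [map_add]
  have : ∀ a : Fin n ⊕ Fin n, Finsupp.weight wt (Finsupp.single a 1) = wt a := by
    intro a
    rw [Finsupp.weight_apply, Finsupp.sum_single_index (by simp), one_smul]
  rw [this, this]
  simp [wt, Prod.ext_iff]

lemma isWH_pow {p : MvPolynomial (Fin n ⊕ Fin n) ℂ} {m : ℕ × ℕ}
    (h : IsWeightedHomogeneous wt p m) (N : ℕ) :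
    IsWeightedHomogeneous wt (p ^ N) (N • m) := by
  induction N with
  | zero => simpa using isWeightedHomogeneous_one ℂ wt
  | succ k ih =>
      rw [pow_succ, succ_nsmul]
      exact ih.mul h

lemma isWH_bilin_pow (B : Matrix (Fin n) (Fin n) ℂ) (N : ℕ) :
    IsWeightedHomogeneous wt (bilin B ^ N) (N, N) := by
  have := isWH_pow (isWH_bilin B) N
  simpa [Prod.ext_iff] using this

lemma ext_on_XSet {N : ℕ} {p q : MvPolynomial (Fin n ⊕ Fin n) ℂ}
    (hp : IsWeightedHomogeneous wt p (N, N)) (hq : IsWeightedHomogeneous wt q (N, N))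
    (h : ∀ m ∈ XSet n N, ∀ m' ∈ XSet n N, coeff (emb m m') p = coeff (emb m m') q) :
    p = q := by
  apply MvPolynomial.ext
  intro d
  by_cases hw : Finsupp.weight wt d = ((N, N) : ℕ × ℕ)
  · set m : Fin n → ℕ := fun j => d (Sum.inl j) with hm
    set m' : Fin n → ℕ := fun k => d (Sum.inr k) with hm'
    have hd : d = emb m m' := by
      ext a
      cases a with
      | inl j => rfl
      | inr k => rfl
    rw [weight_eq, Prod.ext_iff] at hw
    rw [hd]
    exact h m (mem_XSet.mpr hw.1) m' (mem_XSet.mpr hw.2)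
  · rw [hp.coeff_eq_zero d hw, hq.coeff_eq_zero d hw]

/-! ### Generating polynomials -/

noncomputable def lin (A : Matrix (Fin n) (Fin n) ℂ) (i : Fin n) : MvPolynomial (Fin n) ℂ :=
  ∑ j, C (A i j) * X j

noncomputable def Gpoly (A : Matrix (Fin n) (Fin n) ℂ) (x : Fin n → ℕ) : MvPolynomial (Fin n) ℂ :=
  ∏ i, lin A i ^ x i

lemma coeff_Gpoly (A : Matrix (Fin n) (Fin n) ℂ) (x m : Fin n → ℕ) :
    coeff (fs m) (Gpoly A x) = (Nat.multinomial Finset.univ m : ℂ) * phi A x m := by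
  rw [phi, mul_div_cancel₀]
  · rfl
  · exact mult_ne_zero m

lemma coeff_Gpoly_conj (A : Matrix (Fin n) (Fin n) ℂ) (x m : Fin n → ℕ) :
    coeff (fs m) (Gpoly (fun i j => (starRingEnd ℂ) (A i j)) x)
      = (starRingEnd ℂ) (coeff (fs m) (Gpoly A x)) := by
  have hmap : MvPolynomial.map (starRingEnd ℂ) (Gpoly A x)
      = Gpoly (fun i j => (starRingEnd ℂ) (A i j)) x := by
    unfold Gpoly lin
    rw [map_prod (MvPolynomial.map (starRingEnd ℂ))]
    refine Finset.prod_congr rfl fun i _ => ?_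
    rw [map_pow]
    congr 1
    rw [map_sum (MvPolynomial.map (starRingEnd ℂ))]
    refine Finset.sum_congr rfl fun j _ => ?_
    rw [_root_.map_mul, MvPolynomial.map_C, MvPolynomial.map_X]
  rw [← hmap, MvPolynomial.coeff_map]

lemma lin_one (i : Fin n) : lin (1 : Matrix (Fin n) (Fin n) ℂ) i = X i := by
  unfold lin
  rw [Finset.sum_eq_single i]
  · simp [Matrix.one_apply]
  · intro j _ hj
    simp [Matrix.one_apply, (Ne.symm hj)]
  · simp

lemma Gpoly_one (x : Fin n → ℕ) :
    Gpoly (1 : Matrix (Fin n) (Fin n) ℂ) x = monomial (fs x) 1 := by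
  unfold Gpoly
  simp only [lin_one]
  have : fs x = Finsupp.equivFunOnFinite.symm x := rfl
  rw [← prod_X_pow_eq_monomial]
  rw [Finset.prod_subset (Finset.subset_univ (fs x).support)]
  · rfl
  · intro i _ hi
    have : fs x i = 0 := Finsupp.notMem_support_iff.mp hi
    rw [show (fs x) i = x i from rfl] at this
    simp [this]

lemma coeff_Gpoly_one (x m : Fin n → ℕ) :
    coeff (fs m) (Gpoly (1 : Matrix (Fin n) (Fin n) ℂ) x) = if x = m then 1 else 0 := by
  rw [Gpoly_one, coeff_monomial]
  by_cases h : x = m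
  · simp [h]
  · rw [if_neg, if_neg h]
    exact fun hc => h (fs_inj hc)

/-! ### The key expansion -/

lemma sum_eta_eq_bilin (A B : Matrix (Fin n) (Fin n) ℂ) (η : Fin n → ℂ) :
    ∑ i, C (η i) * rename Sum.inl (lin A i) * rename Sum.inr (lin B i)
      = bilin (B.transpose * Matrix.diagonal η * A) := by
  unfold bilin lin
  simp only [map_sum, _root_.map_mul, rename_C, rename_X]
  simp only [Finset.mul_sum, Finset.sum_mul]
  rw [Finset.sum_comm]
  refine Finset.sum_congr rfl fun j _ => ?_
  rw [Finset.sum_comm]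
  refine Finset.sum_congr rfl fun k _ => ?_
  have hM : ∀ a b, (B.transpose * Matrix.diagonal η * A) a b = ∑ i, B i a * (η i * A i b) := by
    intro a b
    rw [Matrix.mul_assoc, Matrix.mul_apply]
    congr 1
    ext i
    rw [Matrix.diagonal_mul, Matrix.transpose_apply]
  rw [hM, map_sum, Finset.sum_mul, Finset.sum_mul]
  refine Finset.sum_congr rfl fun i _ => ?_
  simp only [_root_.map_mul]
  ring

lemma pow_expand (A B : Matrix (Fin n) (Fin n) ℂ) (η : Fin n → ℂ) (N : ℕ) :
    bilin (B.transpose * Matrix.diagonal η * A) ^ N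
      = ∑ x ∈ XSet n N,
          C ((Nat.multinomial Finset.univ x : ℂ) * ∏ i, η i ^ x i) *
            (rename Sum.inl (Gpoly A x) * rename Sum.inr (Gpoly B x)) := by
  rw [← sum_eta_eq_bilin, Finset.sum_pow_eq_sum_piAntidiag, ← XSet_eq_piAntidiag]
  refine Finset.sum_congr rfl fun x hx => ?_
  have expand : ∏ i, (C (η i) * rename Sum.inl (lin A i) * rename Sum.inr (lin B i)) ^ x i
      = C (∏ i, η i ^ x i) * (rename Sum.inl (Gpoly A x) * rename Sum.inr (Gpoly B x)) := by
    have hC : (∏ i, C (η i) ^ x i : MvPolynomial (Fin n ⊕ Fin n) ℂ)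
        = C (∏ i, η i ^ x i) := by
      rw [map_prod (C : ℂ →+* MvPolynomial (Fin n ⊕ Fin n) ℂ)]
      simp [map_pow]
    have hA : (∏ i, rename Sum.inl (lin A i) ^ x i : MvPolynomial (Fin n ⊕ Fin n) ℂ)
        = rename Sum.inl (Gpoly A x) := by
      rw [Gpoly, map_prod (rename (R := ℂ) (Sum.inl : Fin n → Fin n ⊕ Fin n))]
      simp [map_pow]
    have hB : (∏ i, rename Sum.inr (lin B i) ^ x i : MvPolynomial (Fin n ⊕ Fin n) ℂ)
        = rename Sum.inr (Gpoly B x) := by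
      rw [Gpoly, map_prod (rename (R := ℂ) (Sum.inr : Fin n → Fin n ⊕ Fin n))]
      simp [map_pow]
    simp only [mul_pow, Finset.prod_mul_distrib, hC, hA, hB]
    ring
  rw [expand, ← mul_assoc]
  congr 1
  rw [← C_eq_coe_nat, ← _root_.map_mul]

lemma coeff_pow_expand (A B : Matrix (Fin n) (Fin n) ℂ) (η : Fin n → ℂ) (N : ℕ)
    (m m' : Fin n → ℕ) :
    coeff (emb m m') (bilin (B.transpose * Matrix.diagonal η * A) ^ N)
      = ∑ x ∈ XSet n N,
          (Nat.multinomial Finset.univ x : ℂ) * (∏ i, η i ^ x i) *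
            (coeff (fs m) (Gpoly A x) * coeff (fs m') (Gpoly B x)) := by
  rw [pow_expand, coeff_sum]
  refine Finset.sum_congr rfl fun x _ => ?_
  rw [coeff_C_mul, coeff_emb_mul]

/-! ### Root extraction -/

lemma pow_eq_pow_root {σ : Type*} (p q : MvPolynomial σ ℂ) {N : ℕ} (hN : 1 ≤ N)
    (hq : q ≠ 0) (h : p ^ N = q ^ N) : ∃ ζ : ℂ, ζ ^ N = 1 ∧ p = ζ • q := by
  classical
  set K := FractionRing (MvPolynomial σ ℂ)
  set f := algebraMap (MvPolynomial σ ℂ) K with hf_def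
  have hf : Function.Injective f := IsFractionRing.injective _ _
  have hfq : f q ≠ 0 := fun h0 => hq (hf (by simpa using h0))
  set z : K := f p / f q with hz_def
  have hz : z ^ N = 1 := by
    rw [hz_def, div_pow, ← map_pow, ← map_pow, h,
      div_self (by rw [map_pow]; exact pow_ne_zero _ hfq)]
  set g : ℂ →+* K := f.comp (MvPolynomial.C) with hg_def
  have hprim : IsPrimitiveRoot (Complex.exp (2 * Real.pi * Complex.I / N)) N :=
    Complex.isPrimitiveRoot_exp N (by omega)
  have hfac := Polynomial.X_pow_sub_one_eq_prod (R := ℂ) (by omega : 0 < N) hprim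
  have heval := congrArg (Polynomial.eval₂ g z) hfac
  rw [Polynomial.eval₂_sub, Polynomial.eval₂_pow, Polynomial.eval₂_X, Polynomial.eval₂_one,
    Polynomial.eval₂_finset_prod] at heval
  simp only [Polynomial.eval₂_sub, Polynomial.eval₂_X, Polynomial.eval₂_C] at heval
  have h0 : (∏ ζ ∈ Polynomial.nthRootsFinset N (1 : ℂ), (z - g ζ)) = 0 := by
    rw [← heval, hz, sub_self]
  obtain ⟨ζ, hζmem, hz0⟩ := Finset.prod_eq_zero_iff.mp h0
  refine ⟨ζ, (Polynomial.mem_nthRootsFinset (by omega : 0 < N) (1 : ℂ)).mp hζmem, ?_⟩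
  apply hf
  have hzeq : z = g ζ := by rwa [sub_eq_zero] at hz0
  have : f p = g ζ * f q := by
    rw [← hzeq, hz_def, div_mul_cancel₀ _ hfq]
  rw [this, MvPolynomial.smul_eq_C_mul, _root_.map_mul, hg_def]
  rfl

end KrawtchoukAux

open KrawtchoukAux in
/-- Theorem 1 (Mizukawa): the orthogonality relation for the multivariate Krawtchouk
polynomials holds iff `A₀* D₁ A₀ = ζ D₂` for some `N`-th root of unity `ζ`. -/
theorem krawtchouk_orthogonality_iff
    (n N : ℕ) (hn : 2 ≤ n) (hN : 1 ≤ N)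
    (A0 : Matrix (Fin n) (Fin n) ℂ)
    (hrow : ∀ j, A0 ⟨0, by omega⟩ j = 1) (hcol : ∀ i, A0 i ⟨0, by omega⟩ = 1)
    (η1 η2 : Fin n → ℂ) (hη1 : ∀ i, η1 i ≠ 0) (hη2 : ∀ i, η2 i ≠ 0) :
    (∀ m ∈ XSet n N, ∀ m' ∈ XSet n N,
        ∑ x ∈ XSet n N,
            (Nat.multinomial Finset.univ x : ℂ) * (∏ i, η1 i ^ x i) *
              phi A0 x m * (starRingEnd ℂ) (phi A0 x m')
          = if m = m' then (∏ i, η2 i ^ m i) / (Nat.multinomial Finset.univ m : ℂ)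
            else 0)
    ↔ ∃ ζ : ℂ, ζ ^ N = 1 ∧
        A0.conjTranspose * Matrix.diagonal η1 * A0 = ζ • Matrix.diagonal η2 := by
  classical
  set cA0 : Matrix (Fin n) (Fin n) ℂ := fun i j => (starRingEnd ℂ) (A0 i j) with hcA0
  have hBt : cA0.transpose = A0.conjTranspose := by
    ext k i
    simp [hcA0, Matrix.transpose_apply, Matrix.conjTranspose_apply]
    rfl
  have h1trans : ((1 : Matrix (Fin n) (Fin n) ℂ)).transpose * Matrix.diagonal η2 * 1
      = Matrix.diagonal η2 := by
    rw [Matrix.transpose_one, Matrix.one_mul, Matrix.mul_one]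
  -- coefficients of the LHS power
  have coeffP : ∀ m m' : Fin n → ℕ,
      coeff (emb m m') (bilin (cA0.transpose * Matrix.diagonal η1 * A0) ^ N)
        = (Nat.multinomial Finset.univ m : ℂ) * (Nat.multinomial Finset.univ m' : ℂ) *
          ∑ x ∈ XSet n N,
            (Nat.multinomial Finset.univ x : ℂ) * (∏ i, η1 i ^ x i) *
              phi A0 x m * (starRingEnd ℂ) (phi A0 x m') := by
    intro m m'
    rw [coeff_pow_expand, Finset.mul_sum]
    refine Finset.sum_congr rfl fun x _ => ?_
    rw [coeff_Gpoly]
    have : coeff (fs m') (Gpoly cA0 x) = (starRingEnd ℂ) (coeff (fs m') (Gpoly A0 x)) :=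
      coeff_Gpoly_conj A0 x m'
    rw [this, coeff_Gpoly, _root_.map_mul, map_natCast]
    ring
  -- coefficients of the RHS power
  have coeffQ : ∀ m ∈ XSet n N, ∀ m' : Fin n → ℕ,
      coeff (emb m m')
          (bilin ((1 : Matrix (Fin n) (Fin n) ℂ).transpose * Matrix.diagonal η2 * 1) ^ N)
        = if m = m' then
            (Nat.multinomial Finset.univ m : ℂ) * ∏ i, η2 i ^ m i else 0 := by
    intro m hm m'
    rw [coeff_pow_expand]
    simp only [coeff_Gpoly_one]
    rw [Finset.sum_eq_single m]
    · by_cases h : m = m'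
      · simp [h]
      · simp [h, fun hc : m = m' => h hc]
    · intro x _ hx
      simp [hx]
    · intro h
      exact absurd hm h
  have hq_ne : bilin ((1 : Matrix (Fin n) (Fin n) ℂ).transpose * Matrix.diagonal η2 * 1) ≠ 0 := by
    rw [h1trans]
    intro h0
    have i0 : Fin n := ⟨0, by omega⟩
    have := coeff_bilin (Matrix.diagonal η2) i0 i0
    rw [h0] at this
    simp [Matrix.diagonal_apply_eq] at this
    exact hη2 i0 this.symm
  constructor
  · -- orthogonality → matrix identity
    intro hortho
    have hPQ : bilin (cA0.transpose * Matrix.diagonal η1 * A0) ^ N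
        = bilin ((1 : Matrix (Fin n) (Fin n) ℂ).transpose * Matrix.diagonal η2 * 1) ^ N := by
      apply ext_on_XSet (isWH_bilin_pow _ N) (isWH_bilin_pow _ N)
      intro m hm m' hm'
      rw [coeffP, coeffQ m hm m', hortho m hm m' hm']
      by_cases h : m = m'
      · subst h
        rw [if_pos rfl, if_pos rfl]
        have hcm := mult_ne_zero m
        field_simp
      · simp [h]
    obtain ⟨ζ, hζ, heq⟩ := pow_eq_pow_root _ _ hN hq_ne hPQ
    refine ⟨ζ, hζ, ?_⟩
    rw [h1trans, MvPolynomial.smul_eq_C_mul, ← bilin_smul] at heq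
    have hmat : cA0.transpose * Matrix.diagonal η1 * A0 = ζ • Matrix.diagonal η2 := by
      ext k j
      have := congrArg
        (coeff (Finsupp.single (Sum.inl j) 1 + Finsupp.single (Sum.inr k) 1)) heq
      rwa [coeff_bilin, coeff_bilin] at this
    rwa [hBt] at hmat
  · -- matrix identity → orthogonality
    rintro ⟨ζ, hζ, heq⟩ m hm m' hm'
    have hM : cA0.transpose * Matrix.diagonal η1 * A0 = ζ • Matrix.diagonal η2 := by
      rw [hBt]; exact heq
    have hPQ : bilin (cA0.transpose * Matrix.diagonal η1 * A0) ^ N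
        = bilin ((1 : Matrix (Fin n) (Fin n) ℂ).transpose * Matrix.diagonal η2 * 1) ^ N := by
      rw [hM, bilin_smul, h1trans, mul_pow, ← map_pow, hζ, map_one, one_mul]
    have hc := congrArg (coeff (emb m m')) hPQ
    rw [coeffP, coeffQ m hm m'] at hc
    have hne : (Nat.multinomial Finset.univ m : ℂ) * (Nat.multinomial Finset.univ m' : ℂ) ≠ 0 :=
      mul_ne_zero (mult_ne_zero m) (mult_ne_zero m')
    by_cases h : m = m'
    · subst h
      rw [if_pos rfl] at hc ⊢
      rw [mul_assoc] at hc
      have h3 := mul_left_cancel₀ (mult_ne_zero m) hc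
      rw [eq_div_iff (mult_ne_zero m), mul_comm]
      exact h3
    · rw [if_neg h] at hc ⊢
      exact (mul_eq_zero.mp hc).resolve_left hne
end

section
/- Let n ≥ 1 and N ≥ 1 be integers, B = (b_{ij})_{0≤i,j≤n-1} ∈ M_n(ℂ), and D = diag(d_0,…,d_{n-1}) ∈ M_n(ℂ) a diagonal matrix with d_i ≠ 0 for all i. Suppose that (u B ᵗt)^N = (u D ᵗt)^N for all row vectors u, t ∈ ℂⁿ (i.e., (∑_{i,j} u_i b_{ij} t_j)^N = (∑_i d_i u_i t_i)^N for all u, t). Then there exists a complex number ζ with ζ^N = 1 such that B = ζ D. -/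
open Finset

/-- If the bilinear forms associated to `B` and to an invertible diagonal matrix `D`
satisfy `(u B ᵗt)^N = (u D ᵗt)^N` for all complex vectors `u`, `t`, then `B = ζ D`
for some `N`-th root of unity `ζ`. -/
theorem eq_root_of_unity_smul_diagonal_of_pow_bilinear_eq
    (n N : ℕ) (hn : 1 ≤ n) (hN : 1 ≤ N)
    (B : Matrix (Fin n) (Fin n) ℂ) (d : Fin n → ℂ) (hd : ∀ i, d i ≠ 0)
    (h : ∀ u t : Fin n → ℂ,
      (∑ i, ∑ j, u i * B i j * t j) ^ N = (∑ i, d i * u i * t i) ^ N) :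
    ∃ ζ : ℂ, ζ ^ N = 1 ∧ B = ζ • Matrix.diagonal d := by
  have hN0 : N ≠ 0 := by omega
  have hoff : ∀ a b : Fin n, a ≠ b → B a b = 0 := by
    intro a b hab
    have := h (Pi.single a 1) (Pi.single b 1)
    simp [Pi.single_apply, ite_mul, mul_ite, Finset.sum_ite_eq, hab, Ne.symm hab,
      zero_pow hN0] at this
    exact this.1
  have hdiag : ∀ a : Fin n, (B a a) ^ N = (d a) ^ N := by
    intro a
    have := h (Pi.single a 1) (Pi.single a 1)
    simpa [Pi.single_apply, ite_mul, mul_ite, Finset.sum_ite_eq] using this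
  set i0 : Fin n := ⟨0, hn⟩ with hi0
  set ζ : ℂ := B i0 i0 / d i0 with hζ
  have hζN : ζ ^ N = 1 := by
    rw [hζ, div_pow, hdiag, div_self (pow_ne_zero _ (hd i0))]
  refine ⟨ζ, hζN, ?_⟩
  have hrat : ∀ i : Fin n, B i i = ζ * d i := by
    intro i
    rcases eq_or_ne i i0 with rfl | hi
    · rw [hζ, div_mul_cancel₀ _ (hd i0)]
    · have := h (fun k => (Pi.single i0 ((d i0)⁻¹) : Fin n → ℂ) k
          - (Pi.single i ((d i)⁻¹) : Fin n → ℂ) k)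
        (fun k => (Pi.single i0 (1:ℂ) : Fin n → ℂ) k + (Pi.single i (1:ℂ) : Fin n → ℂ) k)
      simp only [sub_mul, mul_add, add_mul, mul_sub, Finset.sum_add_distrib,
        Finset.sum_sub_distrib, Pi.single_apply, ite_mul, mul_ite, mul_one, mul_zero,
        zero_mul, one_mul, Finset.sum_ite_eq, Finset.sum_ite_eq', Finset.mem_univ, if_true,
        hi, Ne.symm hi, if_false, hoff i0 i (Ne.symm hi), hoff i i0 hi] at this
      rw [mul_inv_cancel₀ (hd i0), mul_inv_cancel₀ (hd i)] at this
      simp [zero_pow hN0] at this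
      have h3 : (d i0)⁻¹ * B i0 i0 = (d i)⁻¹ * B i i := by linear_combination this.1
      rw [inv_mul_eq_div, inv_mul_eq_div, div_eq_div_iff (hd i0) (hd i)] at h3
      rw [hζ, eq_comm, div_mul_eq_mul_div, div_eq_iff (hd i0)]
      linear_combination h3
  ext i j
  rcases eq_or_ne i j with rfl | hij
  · simp [Matrix.diagonal, hrat i]
  · simp [Matrix.diagonal, hoff i j hij, hij]
end
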